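/- Let T be a tree and let v be a vertex on a path such that, with components labeled U_1, W_1, U_2, W_2, ... outward from v along the path, both the component sizes and the degrees of the path vertices are weakly decreasing outward (|V(U_1)| ≥ |V(W_1)| ≥ |V(U_2)| ≥ ... and d(u_1) ≥ d(w_1) ≥ d(u_2) ≥ ...). Then among vertices on the path, the function g_T attains its minimum at u_1. -/

import Mathlib

open SimpleGraph

section TreeAux

variable {V : Type*} {G : SimpleGraph V}

lemma tree_path_length_eq_dist (hG : G.IsTree) {x y : V} (p : G.Walk x y) (hp : p.IsPath) :
    p.length = G.dist x y := by
  classical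
  obtain ⟨q, hq, hlen⟩ := hG.isConnected.exists_path_of_dist x y
  have : (⟨p, hp⟩ : G.Path x y) = ⟨q, hq⟩ := hG.IsAcyclic.path_unique _ _
  rw [← hlen]
  exact congrArg Walk.length (congrArg Subtype.val this)

lemma tree_notMem_support_of_avoid (hG : G.IsTree) {a b : V} (hab : G.Adj a b) {x : V}
    {p : G.Walk a x} (hp : p.IsPath) (havoid : s(a, b) ∉ p.edges) : b ∉ p.support := by
  classical
  intro hb
  have hp1 : (p.takeUntil b hb).IsPath := hp.takeUntil hb
  have : (⟨p.takeUntil b hb, hp1⟩ : G.Path a b) = Path.singleton hab :=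
    hG.IsAcyclic.path_unique _ _
  have hmem : s(a, b) ∈ (p.takeUntil b hb).edges := by
    have := congrArg (fun q : G.Path a b => (q : G.Walk a b).edges) this
    simp only [Path.singleton] at this
    rw [this]
    simp
  exact havoid (Walk.edges_takeUntil_subset _ _ hmem)

lemma exists_path_avoiding {S : Set (Sym2 V)} {x y : V}
    (h : (G.deleteEdges S).Reachable x y) :
    ∃ p : G.Walk x y, p.IsPath ∧ ∀ e ∈ p.edges, e ∉ S := by
  classical
  obtain ⟨q⟩ := h
  refine ⟨(q.map (Hom.ofLE (G.deleteEdges_le S))).bypass,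
    Walk.bypass_isPath _, fun e he => ?_⟩
  have he' := Walk.edges_bypass_subset _ he
  simp_rw [Walk.edges_map, List.mem_map, Hom.ofLE_apply, Sym2.map_id', id] at he'
  obtain ⟨e', he', rfl⟩ := he'
  have := q.edges_subset_edgeSet he'
  rw [edgeSet_deleteEdges] at this
  exact this.2

lemma tree_dist_add_one (hG : G.IsTree) {a b : V} (hab : G.Adj a b) {x : V}
    (h : (G.deleteEdges {s(a, b)}).Reachable a x) : G.dist b x = G.dist a x + 1 := by
  obtain ⟨p, hp, havoid⟩ := exists_path_avoiding h
  have hb : b ∉ p.support :=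
    tree_notMem_support_of_avoid hG hab hp (fun hm => havoid _ hm rfl)
  have hcons : (Walk.cons hab.symm p).IsPath := hp.cons hb
  have h1 := tree_path_length_eq_dist hG _ hcons
  have h2 := tree_path_length_eq_dist hG p hp
  simp only [Walk.length_cons] at h1
  omega

lemma tree_not_reach_delete (hG : G.IsTree) {a b : V} (hab : G.Adj a b) :
    ¬ (G.deleteEdges {s(a, b)}).Reachable a b := by
  have hbr := (isAcyclic_iff_forall_adj_isBridge.mp hG.IsAcyclic) hab
  exact isBridge_iff.mp hbr

lemma reach_delete_or (hG : G.Connected) (a b x : V) :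
    (G.deleteEdges {s(a, b)}).Reachable a x ∨ (G.deleteEdges {s(a, b)}).Reachable b x := by
  set K := G.deleteEdges {s(a, b)} with hK
  have aux : ∀ {y z : V} (p : G.Walk y z),
      (K.Reachable a y ∨ K.Reachable b y) → (K.Reachable a z ∨ K.Reachable b z) := by
    intro y z p
    induction p with
    | nil => exact id
    | @cons y v z h q ih =>
      intro hy
      apply ih
      by_cases he : s(y, v) = s(a, b)
      · rw [Sym2.eq_iff] at he
        rcases he with ⟨rfl, rfl⟩ | ⟨rfl, rfl⟩
        · exact Or.inr (Reachable.refl _)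
        · exact Or.inl (Reachable.refl _)
      · have hadj : K.Adj y v := by
          rw [hK, deleteEdges_adj]
          exact ⟨h, by simpa using he⟩
        rcases hy with hy | hy
        · exact Or.inl (hy.trans hadj.reachable)
        · exact Or.inr (hy.trans hadj.reachable)
  obtain ⟨p⟩ := hG.preconnected a x
  exact aux p (Or.inl (Reachable.refl _))

lemma exists_walkSeg {c : ℕ → V} {M : ℕ}
    (hadj : ∀ k, k + 1 < M → G.Adj (c k) (c (k + 1)))
    (hinj : ∀ k k', k < M → k' < M → c k = c k' → k = k') :
    ∀ (len a : ℕ), a + len < M → ∃ p : G.Walk (c a) (c (a + len)), p.IsPath ∧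
      (∀ v ∈ p.support, ∃ j, a ≤ j ∧ j ≤ a + len ∧ v = c j) ∧
      (∀ e ∈ p.edges, ∃ j, a ≤ j ∧ j + 1 ≤ a + len ∧ e = s(c j, c (j + 1))) ∧
      (∀ j, a ≤ j → j + 1 ≤ a + len → s(c j, c (j + 1)) ∈ p.edges) := by
  intro len
  induction len with
  | zero =>
    intro a ha
    refine ⟨Walk.nil, Walk.IsPath.nil, ?_, ?_, ?_⟩
    · intro v hv
      simp only [Walk.support_nil, List.mem_singleton] at hv
      exact ⟨a, le_refl a, by omega, hv⟩
    · intro e he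
      simp at he
    · intro j h1 h2
      omega
  | succ len ih =>
    intro a ha
    obtain ⟨p', hp', hsupp', hedges', hmem'⟩ := ih (a + 1) (by omega)
    have hcast : a + 1 + len = a + (len + 1) := by omega
    refine ⟨Walk.cons (hadj a (by omega)) (p'.copy rfl (congrArg c hcast)), ?_, ?_, ?_, ?_⟩
    · apply Walk.IsPath.cons
      · rwa [Walk.isPath_copy]
      · rw [Walk.support_copy]
        intro hmem
        obtain ⟨j, hj1, hj2, hj3⟩ := hsupp' _ hmem
        have : a = j := hinj a j (by omega) (by omega) hj3
        omega
    · intro v hv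
      rw [Walk.support_cons, List.mem_cons, Walk.support_copy] at hv
      rcases hv with rfl | hv
      · exact ⟨a, le_refl a, by omega, rfl⟩
      · obtain ⟨j, hj1, hj2, hj3⟩ := hsupp' _ hv
        exact ⟨j, by omega, by omega, hj3⟩
    · intro e he
      rw [Walk.edges_cons, List.mem_cons, Walk.edges_copy] at he
      rcases he with rfl | he
      · exact ⟨a, le_refl a, by omega, rfl⟩
      · obtain ⟨j, hj1, hj2, hj3⟩ := hedges' _ he
        exact ⟨j, by omega, by omega, hj3⟩
    · intro j h1 h2
      rw [Walk.edges_cons, List.mem_cons, Walk.edges_copy]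
      rcases eq_or_lt_of_le h1 with rfl | hlt
      · exact Or.inl rfl
      · exact Or.inr (hmem' j (by omega) (by omega))

end TreeAux

/-- Total distance `g_T(v) = ∑_{x ∈ V(T)} d_T(v,x)`. -/
noncomputable def totalDist {V : Type*} [Fintype V] (G : SimpleGraph V) (v : V) : ℕ :=
  ∑ u : V, G.dist v u

/-- The degree of a vertex, as the cardinality of its neighbor set. -/
noncomputable def deg {V : Type*} (G : SimpleGraph V) (v : V) : ℕ :=
  (G.neighborSet v).ncard

section KeyCount

variable {V : Type*} {G : SimpleGraph V}

lemma key_count [Fintype V] (hG : G.IsTree) {a b : V} (hab : G.Adj a b) (A B : Finset V)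
    (hA : ∀ x, x ∈ A ↔ (G.deleteEdges {s(a, b)}).Reachable a x)
    (hB : ∀ x, x ∈ B ↔ (G.deleteEdges {s(a, b)}).Reachable b x) :
    totalDist G a + A.card = totalDist G b + B.card := by
  classical
  have hswap : s(b, a) = s(a, b) := Sym2.eq_swap
  have hBc : B = Aᶜ := by
    ext x
    rw [Finset.mem_compl, hA, hB]
    constructor
    · intro hbx hax
      exact tree_not_reach_delete hG hab (hax.trans hbx.symm)
    · intro hax
      exact (reach_delete_or hG.isConnected a b x).resolve_left hax
  have hdistB : ∀ x ∈ Aᶜ, G.dist a x = G.dist b x + 1 := by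
    intro x hx
    rw [← hBc, hB] at hx
    exact tree_dist_add_one hG hab.symm (x := x) (by rwa [hswap])
  have hdistA : ∀ x ∈ A, G.dist b x = G.dist a x + 1 := by
    intro x hx
    rw [hA] at hx
    exact tree_dist_add_one hG hab hx
  have ha : totalDist G a = (∑ x ∈ A, G.dist a x) + (∑ x ∈ Aᶜ, G.dist b x) + Aᶜ.card := by
    rw [totalDist, ← Finset.sum_add_sum_compl A]
    have : ∑ x ∈ Aᶜ, G.dist a x = ∑ x ∈ Aᶜ, (G.dist b x + 1) :=
      Finset.sum_congr rfl fun x hx => hdistB x hx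
    rw [this, Finset.sum_add_distrib]
    simp [add_assoc]
  have hb : totalDist G b = (∑ x ∈ A, G.dist a x) + (∑ x ∈ Aᶜ, G.dist b x) + A.card := by
    rw [totalDist, ← Finset.sum_add_sum_compl A]
    have : ∑ x ∈ A, G.dist b x = ∑ x ∈ A, (G.dist a x + 1) :=
      Finset.sum_congr rfl fun x hx => hdistA x hx
    rw [this, Finset.sum_add_distrib, Finset.sum_const, smul_eq_mul, mul_one]
    ring
  rw [ha, hb, hBc]
  ring

end KeyCount

/-- Let `T` be a tree with a path `u_m ... u_1 w_1 ... w_m` such that the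
component sizes (of `T` minus the path edges) and the degrees of the path vertices
interlace weakly decreasingly outward from `u_1`:
`|U_1| ≥ |W_1| ≥ |U_2| ≥ |W_2| ≥ ...` and `d(u_1) ≥ d(w_1) ≥ d(u_2) ≥ ...`.
Then among the vertices of the path, `g_T` attains its minimum at `u_1`. -/
theorem totalDist_min_at_u1 {V : Type*} [Fintype V]
    (G : SimpleGraph V) (hG : G.IsTree) (m : ℕ) (hm : 1 ≤ m) (u w : ℕ → V)
    (huadj : ∀ i, 1 ≤ i → i + 1 ≤ m → G.Adj (u i) (u (i + 1)))
    (hwadj : ∀ i, 1 ≤ i → i + 1 ≤ m → G.Adj (w i) (w (i + 1)))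
    (hcenter : G.Adj (u 1) (w 1))
    (hdistinct : ∀ i j, 1 ≤ i → i ≤ m → 1 ≤ j → j ≤ m →
      ((u i = u j ∨ w i = w j) → i = j) ∧ u i ≠ w j)
    -- the graph with the path edges removed, and the component sizes
    (H : SimpleGraph V)
    (hH : H = G.deleteEdges
      {e : Sym2 V | (∃ i, 1 ≤ i ∧ i + 1 ≤ m ∧
          (e = s(u i, u (i + 1)) ∨ e = s(w i, w (i + 1)))) ∨ e = s(u 1, w 1)})
    (nU nW : ℕ → ℕ)
    (hnU : ∀ i, nU i = (H.connectedComponentMk (u i)).supp.ncard)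
    (hnW : ∀ i, nW i = (H.connectedComponentMk (w i)).supp.ncard)
    -- sizes interlace weakly decreasingly outward from `u 1`
    (hsizes : ∀ i, 1 ≤ i → i ≤ m →
      nW i ≤ nU i ∧ (i + 1 ≤ m → nU (i + 1) ≤ nW i))
    -- degrees interlace weakly decreasingly outward from `u 1`
    (hdegs : ∀ i, 1 ≤ i → i ≤ m →
      deg G (w i) ≤ deg G (u i) ∧ (i + 1 ≤ m → deg G (u (i + 1)) ≤ deg G (w i))) :
    ∀ i, 1 ≤ i → i ≤ m →
      totalDist G (u 1) ≤ totalDist G (u i) ∧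
      totalDist G (u 1) ≤ totalDist G (w i) := by
  classical
  obtain ⟨Es, hEs, hHE⟩ : ∃ Es : Set (Sym2 V),
      (∀ e : Sym2 V, e ∈ Es ↔ ((∃ i, 1 ≤ i ∧ i + 1 ≤ m ∧
          (e = s(u i, u (i + 1)) ∨ e = s(w i, w (i + 1)))) ∨ e = s(u 1, w 1))) ∧
      H = G.deleteEdges Es := ⟨_, fun e => Iff.rfl, hH⟩
  clear hH
  set c : ℕ → V := fun k => if k < m then u (m - k) else w (k + 1 - m) with hc
  have hcu : ∀ i, 1 ≤ i → i ≤ m → c (m - i) = u i := by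
    intro i h1 h2
    simp only [hc]
    rw [if_pos (by omega)]
    congr 1
    omega
  have hcw : ∀ i, 1 ≤ i → i ≤ m → c (m - 1 + i) = w i := by
    intro i h1 h2
    simp only [hc]
    rw [if_neg (by omega)]
    congr 1
    omega
  have hc_cases : ∀ k, k < 2 * m →
      (∃ i, 1 ≤ i ∧ i ≤ m ∧ k = m - i ∧ c k = u i) ∨
      (∃ i, 1 ≤ i ∧ i ≤ m ∧ k = m - 1 + i ∧ c k = w i) := by
    intro k hk
    by_cases h : k < m
    · exact Or.inl ⟨m - k, by omega, by omega, by omega, by simp only [hc]; rw [if_pos h]⟩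
    · refine Or.inr ⟨k + 1 - m, by omega, by omega, by omega, ?_⟩
      simp only [hc]
      rw [if_neg h]
  have hc_inj : ∀ k k', k < 2 * m → k' < 2 * m → c k = c k' → k = k' := by
    intro k k' hk hk' heq
    rcases hc_cases k hk with ⟨i, hi1, hi2, hki, hcu1⟩ | ⟨i, hi1, hi2, hki, hcu1⟩ <;>
      rcases hc_cases k' hk' with ⟨j, hj1, hj2, hkj, hcu2⟩ | ⟨j, hj1, hj2, hkj, hcu2⟩
    · have := (hdistinct i j hi1 hi2 hj1 hj2).1 (Or.inl (by rw [← hcu1, ← hcu2, heq]))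
      omega
    · exact absurd (by rw [← hcu1, ← hcu2, heq]) (hdistinct i j hi1 hi2 hj1 hj2).2
    · exact absurd (by rw [← hcu1, ← hcu2, ← heq]) (hdistinct j i hj1 hj2 hi1 hi2).2
    · have := (hdistinct i j hi1 hi2 hj1 hj2).1 (Or.inr (by rw [← hcu1, ← hcu2, heq]))
      omega
  have hc_adj : ∀ k, k + 1 < 2 * m → G.Adj (c k) (c (k + 1)) := by
    intro k hk
    rcases lt_trichotomy (k + 1) m with h | h | h
    · have e1 : c k = u (m - k) := by simp only [hc]; rw [if_pos (by omega)]
      have e2 : c (k + 1) = u (m - (k + 1)) := by simp only [hc]; rw [if_pos (by omega)]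
      rw [e1, e2]
      have := huadj (m - (k + 1)) (by omega) (by omega)
      rw [show m - (k + 1) + 1 = m - k by omega] at this
      exact this.symm
    · have e1 : c k = u 1 := by simp only [hc]; rw [if_pos (by omega)]; congr 1; omega
      have e2 : c (k + 1) = w 1 := by simp only [hc]; rw [if_neg (by omega)]; congr 1; omega
      rw [e1, e2]
      exact hcenter
    · have e1 : c k = w (k + 1 - m) := by simp only [hc]; rw [if_neg (by omega)]
      have e2 : c (k + 1) = w (k + 1 - m + 1) := by
        simp only [hc]; rw [if_neg (by omega)]; congr 1; omega
      rw [e1, e2]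
      exact hwadj (k + 1 - m) (by omega) (by omega)
  have hE : ∀ e : Sym2 V, e ∈ Es ↔ ∃ k, k + 1 < 2 * m ∧ e = s(c k, c (k + 1)) := by
    intro e
    rw [hEs e]
    constructor
    · rintro (⟨i, hi1, hi2, (rfl | rfl)⟩ | rfl)
      · refine ⟨m - (i + 1), by omega, ?_⟩
        have e1 : c (m - (i + 1)) = u (i + 1) := hcu (i + 1) (by omega) (by omega)
        have e2 : c (m - (i + 1) + 1) = u i := by
          rw [show m - (i + 1) + 1 = m - i by omega]; exact hcu i (by omega) (by omega)
        rw [e1, e2, Sym2.eq_swap]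
      · refine ⟨m - 1 + i, by omega, ?_⟩
        have e1 : c (m - 1 + i) = w i := hcw i (by omega) (by omega)
        have e2 : c (m - 1 + i + 1) = w (i + 1) := by
          rw [show m - 1 + i + 1 = m - 1 + (i + 1) by omega]
          exact hcw (i + 1) (by omega) (by omega)
        rw [e1, e2]
      · refine ⟨m - 1, by omega, ?_⟩
        have e1 : c (m - 1) = u 1 := hcu 1 le_rfl hm
        have e2 : c (m - 1 + 1) = w 1 := by
          rw [show m - 1 + 1 = m - 1 + 1 from rfl]; exact hcw 1 le_rfl hm
        rw [e1, e2]
    · rintro ⟨k, hk, rfl⟩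
      rcases lt_trichotomy (k + 1) m with h | h | h
      · refine Or.inl ⟨m - (k + 1), by omega, by omega, Or.inl ?_⟩
        have e1 : c k = u (m - k) := by simp only [hc]; rw [if_pos (by omega)]
        have e2 : c (k + 1) = u (m - (k + 1)) := by simp only [hc]; rw [if_pos (by omega)]
        rw [e1, e2, show m - (k + 1) + 1 = m - k by omega, Sym2.eq_swap]
      · refine Or.inr ?_
        have e1 : c k = u 1 := by simp only [hc]; rw [if_pos (by omega)]; congr 1; omega
        have e2 : c (k + 1) = w 1 := by simp only [hc]; rw [if_neg (by omega)]; congr 1; omega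
        rw [e1, e2]
      · refine Or.inl ⟨k + 1 - m, by omega, by omega, Or.inr ?_⟩
        have e1 : c k = w (k + 1 - m) := by simp only [hc]; rw [if_neg (by omega)]
        have e2 : c (k + 1) = w (k + 1 - m + 1) := by
          simp only [hc]; rw [if_neg (by omega)]; congr 1; omega
        rw [e1, e2]
  -- H is contained in each single-edge-deleted graph
  have hHle : ∀ t, t + 1 < 2 * m → H ≤ G.deleteEdges {s(c t, c (t + 1))} := by
    intro t ht
    rw [hHE]
    apply deleteEdges_anti
    intro e he
    rw [Set.mem_singleton_iff] at he
    exact (hE e).mpr ⟨t, ht, he⟩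
  -- reachability along the path in the single-edge-deleted graph
  have hKseg : ∀ t, t + 1 < 2 * m → ∀ k k', k ≤ k' → k' < 2 * m → (k' ≤ t ∨ t + 1 ≤ k) →
      (G.deleteEdges {s(c t, c (t + 1))}).Reachable (c k) (c k') := by
    intro t ht k k' hkk hk' hside
    have hex := exists_walkSeg hc_adj hc_inj (k' - k) k (by omega)
    rw [show k + (k' - k) = k' by omega] at hex
    obtain ⟨p, hp, hsupp, hedges, hmem⟩ := hex
    refine ⟨p.toDeleteEdges _ ?_⟩
    intro e he
    obtain ⟨j, hj1, hj2, rfl⟩ := hedges e he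
    rw [Set.mem_singleton_iff]
    intro heq
    rw [Sym2.eq_iff] at heq
    rcases heq with ⟨h1, h2⟩ | ⟨h1, h2⟩
    · have := hc_inj j t (by omega) (by omega) h1
      omega
    · have h3 := hc_inj j (t + 1) (by omega) (by omega) h1
      have h4 := hc_inj (j + 1) t (by omega) (by omega) h2
      omega
  -- distinct path vertices lie in distinct components of H
  have hcompinj : ∀ k k', k < 2 * m → k' < 2 * m → H.Reachable (c k) (c k') → k = k' := by
    have main : ∀ k k', k < k' → k' < 2 * m → ¬ H.Reachable (c k) (c k') := by
      intro k k' hlt hk' hreach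
      rw [hHE] at hreach
      obtain ⟨q, hq, havoid⟩ := exists_path_avoiding hreach
      have hex := exists_walkSeg hc_adj hc_inj (k' - k) k (by omega)
      rw [show k + (k' - k) = k' by omega] at hex
      obtain ⟨p, hp, _, _, hmem⟩ := hex
      have heqp : (⟨q, hq⟩ : G.Path (c k) (c k')) = ⟨p, hp⟩ := hG.IsAcyclic.path_unique _ _
      have hqp : q = p := congrArg Subtype.val heqp
      have hin : s(c k, c (k + 1)) ∈ q.edges := by rw [hqp]; exact hmem k (le_refl k) (by omega)
      exact havoid _ hin ((hE _).mpr ⟨k, by omega, rfl⟩)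
    intro k k' hk hk' hreach
    rcases lt_trichotomy k k' with h | h | h
    · exact absurd hreach (main k k' h hk')
    · exact h
    · exact absurd hreach.symm (main k' k h hk)
  -- every vertex is H-reachable from some path vertex
  have hcov : ∀ x, ∃ k, k < 2 * m ∧ H.Reachable (c k) x := by
    intro x
    have aux : ∀ {y z : V} (p : G.Walk y z),
        (∃ k, k < 2 * m ∧ H.Reachable (c k) y) →
        (∃ k, k < 2 * m ∧ H.Reachable (c k) z) := by
      intro y z p
      induction p with
      | nil => exact id
      | @cons y v z h q ih =>
        intro hy
        apply ih
        by_cases he : s(y, v) ∈ Es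
        · obtain ⟨j, hj, heq⟩ := (hE _).mp he
          rw [Sym2.eq_iff] at heq
          rcases heq with ⟨h1, h2⟩ | ⟨h1, h2⟩
          · exact ⟨j + 1, by omega, by rw [h2]⟩
          · exact ⟨j, by omega, by rw [h2]⟩
        · have hadj : H.Adj y v := by
            rw [hHE, deleteEdges_adj]
            exact ⟨h, he⟩
          obtain ⟨k, hk, hr⟩ := hy
          exact ⟨k, hk, hr.trans hadj.reachable⟩
    obtain ⟨p⟩ := hG.isConnected.preconnected (c (m - 1)) x
    exact aux p ⟨m - 1, by omega, Reachable.refl _⟩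
  -- the two sides of each path edge
  have hside_left : ∀ t, t + 1 < 2 * m → ∀ x,
      (G.deleteEdges {s(c t, c (t + 1))}).Reachable (c t) x ↔
        ∃ k, k ≤ t ∧ H.Reachable (c k) x := by
    intro t ht x
    constructor
    · intro hr
      obtain ⟨k0, hk0, hreach⟩ := hcov x
      by_cases hcase : k0 ≤ t
      · exact ⟨k0, hcase, hreach⟩
      · exfalso
        have h1 : (G.deleteEdges {s(c t, c (t + 1))}).Reachable (c (t + 1)) x :=
          (hKseg t ht (t + 1) k0 (by omega) (by omega) (Or.inr le_rfl)).trans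
            ((hreach).mono (hHle t ht))
        exact tree_not_reach_delete hG (hc_adj t ht) (hr.trans h1.symm)
    · rintro ⟨k, hk1, hreach⟩
      exact (hKseg t ht k t hk1 (by omega) (Or.inl le_rfl)).symm.trans
        ((hreach).mono (hHle t ht))
  have hside_right : ∀ t, t + 1 < 2 * m → ∀ x,
      (G.deleteEdges {s(c t, c (t + 1))}).Reachable (c (t + 1)) x ↔
        ∃ k, t + 1 ≤ k ∧ k < 2 * m ∧ H.Reachable (c k) x := by
    intro t ht x
    constructor
    · intro hr
      obtain ⟨k0, hk0, hreach⟩ := hcov x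
      by_cases hcase : t + 1 ≤ k0
      · exact ⟨k0, hcase, hk0, hreach⟩
      · exfalso
        have h1 : (G.deleteEdges {s(c t, c (t + 1))}).Reachable (c t) x :=
          (hKseg t ht k0 t (by omega) (by omega) (Or.inl le_rfl)).symm.trans
            ((hreach).mono (hHle t ht))
        exact tree_not_reach_delete hG (hc_adj t ht) (h1.trans hr.symm)
    · rintro ⟨k, hk1, hk2, hreach⟩
      exact (hKseg t ht (t + 1) k hk1 hk2 (Or.inr le_rfl)).trans
        ((hreach).mono (hHle t ht))
  -- the component Finsets
  set Sk : ℕ → Finset V := fun k => (Set.toFinite {x | H.Reachable (c k) x}).toFinset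
    with hSkdef
  have hSk : ∀ k x, x ∈ Sk k ↔ H.Reachable (c k) x := by
    intro k x
    simp [hSkdef]
  have hcard_u : ∀ i, 1 ≤ i → i ≤ m → (Sk (m - i)).card = nU i := by
    intro i h1 h2
    rw [hnU i]
    have hsupp_eq : (H.connectedComponentMk (u i)).supp
        = {x | H.Reachable (c (m - i)) x} := by
      ext x
      rw [ConnectedComponent.mem_supp_iff, ConnectedComponent.eq, hcu i h1 h2,
        Set.mem_setOf_eq, reachable_comm]
    rw [hsupp_eq, Set.ncard_eq_toFinset_card _ (Set.toFinite _)]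
  have hcard_w : ∀ i, 1 ≤ i → i ≤ m → (Sk (m - 1 + i)).card = nW i := by
    intro i h1 h2
    rw [hnW i]
    have hsupp_eq : (H.connectedComponentMk (w i)).supp
        = {x | H.Reachable (c (m - 1 + i)) x} := by
      ext x
      rw [ConnectedComponent.mem_supp_iff, ConnectedComponent.eq, hcw i h1 h2,
        Set.mem_setOf_eq, reachable_comm]
    rw [hsupp_eq, Set.ncard_eq_toFinset_card _ (Set.toFinite _)]
  have hdisjSk : ∀ k k', k < 2 * m → k' < 2 * m → k ≠ k' → Disjoint (Sk k) (Sk k') := by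
    intro k k' hk hk' hne
    rw [Finset.disjoint_left]
    intro x hx hx'
    exact hne (hcompinj k k' hk hk' (((hSk k x).mp hx).trans ((hSk k' x).mp hx').symm))
  set LF : ℕ → Finset V := fun t => (Finset.range (t + 1)).biUnion Sk with hLFdef
  set RF : ℕ → Finset V := fun t => (Finset.Ico (t + 1) (2 * m)).biUnion Sk with hRFdef
  have hLF_card : ∀ t, t + 1 < 2 * m →
      (LF t).card = ∑ k ∈ Finset.range (t + 1), (Sk k).card := by
    intro t ht
    apply Finset.card_biUnion
    intro k hk k' hk' hne
    rw [Finset.mem_coe, Finset.mem_range] at hk hk'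
    exact hdisjSk k k' (by omega) (by omega) hne
  have hRF_card : ∀ t, t + 1 < 2 * m →
      (RF t).card = ∑ k ∈ Finset.Ico (t + 1) (2 * m), (Sk k).card := by
    intro t ht
    apply Finset.card_biUnion
    intro k hk k' hk' hne
    rw [Finset.mem_coe, Finset.mem_Ico] at hk hk'
    exact hdisjSk k k' (by omega) (by omega) hne
  have hkey : ∀ t, t + 1 < 2 * m →
      totalDist G (c t) + (LF t).card = totalDist G (c (t + 1)) + (RF t).card := by
    intro t ht
    apply key_count hG (hc_adj t ht)
    · intro x
      rw [hside_left t ht x]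
      simp only [hLFdef, Finset.mem_biUnion, Finset.mem_range]
      constructor
      · rintro ⟨k, h1, h2⟩
        exact ⟨k, by omega, (hSk k x).mp h2⟩
      · rintro ⟨k, h1, h2⟩
        exact ⟨k, by omega, (hSk k x).mpr h2⟩
    · intro x
      rw [hside_right t ht x]
      simp only [hRFdef, Finset.mem_biUnion, Finset.mem_Ico]
      constructor
      · rintro ⟨k, h1, h2⟩
        exact ⟨k, h1.1, h1.2, (hSk k x).mp h2⟩
      · rintro ⟨k, h1, h2, h3⟩
        exact ⟨k, ⟨h1, h2⟩, (hSk k x).mpr h3⟩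
  -- the size inequalities
  have hineq_right : ∀ t, m - 1 ≤ t → t + 1 < 2 * m → (RF t).card ≤ (LF t).card := by
    intro t h1 h2
    rw [hLF_card t h2, hRF_card t h2]
    calc ∑ k ∈ Finset.Ico (t + 1) (2 * m), (Sk k).card
        ≤ ∑ k ∈ Finset.Ico (t + 1) (2 * m), (Sk (2 * m - 1 - k)).card := by
          apply Finset.sum_le_sum
          intro k hk
          rw [Finset.mem_Ico] at hk
          have e1 : (Sk k).card = nW (k + 1 - m) := by
            have := hcard_w (k + 1 - m) (by omega) (by omega)
            rw [show m - 1 + (k + 1 - m) = k by omega] at this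
            exact this
          have e2 : (Sk (2 * m - 1 - k)).card = nU (k + 1 - m) := by
            have := hcard_u (k + 1 - m) (by omega) (by omega)
            rw [show m - (k + 1 - m) = 2 * m - 1 - k by omega] at this
            exact this
          rw [e1, e2]
          exact (hsizes (k + 1 - m) (by omega) (by omega)).1
      _ = ∑ j ∈ (Finset.Ico (t + 1) (2 * m)).image (fun k => 2 * m - 1 - k), (Sk j).card := by
          rw [Finset.sum_image]
          intro a ha b hb heq
          rw [Finset.mem_coe, Finset.mem_Ico] at ha hb
          simp only at heq
          omega
      _ ≤ ∑ k ∈ Finset.range (t + 1), (Sk k).card := by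
          apply Finset.sum_le_sum_of_subset
          intro j hj
          rw [Finset.mem_image] at hj
          obtain ⟨k, hk, rfl⟩ := hj
          rw [Finset.mem_Ico] at hk
          rw [Finset.mem_range]
          omega
  have hineq_left : ∀ t, t + 2 ≤ m → (LF t).card ≤ (RF t).card := by
    intro t h1
    have h2 : t + 1 < 2 * m := by omega
    rw [hLF_card t h2, hRF_card t h2]
    calc ∑ k ∈ Finset.range (t + 1), (Sk k).card
        ≤ ∑ k ∈ Finset.range (t + 1), (Sk (2 * m - 2 - k)).card := by
          apply Finset.sum_le_sum
          intro k hk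
          rw [Finset.mem_range] at hk
          have e1 : (Sk k).card = nU (m - k) := by
            have := hcard_u (m - k) (by omega) (by omega)
            rw [show m - (m - k) = k by omega] at this
            exact this
          have e2 : (Sk (2 * m - 2 - k)).card = nW (m - 1 - k) := by
            have := hcard_w (m - 1 - k) (by omega) (by omega)
            rw [show m - 1 + (m - 1 - k) = 2 * m - 2 - k by omega] at this
            exact this
          rw [e1, e2]
          have := (hsizes (m - 1 - k) (by omega) (by omega)).2 (by omega)
          rw [show m - 1 - k + 1 = m - k by omega] at this
          exact this
      _ = ∑ j ∈ (Finset.range (t + 1)).image (fun k => 2 * m - 2 - k), (Sk j).card := by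
          rw [Finset.sum_image]
          intro a ha b hb heq
          rw [Finset.mem_coe, Finset.mem_range] at ha hb
          simp only at heq
          omega
      _ ≤ ∑ k ∈ Finset.Ico (t + 1) (2 * m), (Sk k).card := by
          apply Finset.sum_le_sum_of_subset
          intro j hj
          rw [Finset.mem_image] at hj
          obtain ⟨k, hk, rfl⟩ := hj
          rw [Finset.mem_range] at hk
          rw [Finset.mem_Ico]
          omega
  -- the monotone chains
  have hchainR : ∀ d, m - 1 + d < 2 * m → totalDist G (c (m - 1)) ≤ totalDist G (c (m - 1 + d)) := by
    intro d
    induction d with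
    | zero => intro _; exact le_refl _
    | succ d ih =>
      intro h
      have hk := hkey (m - 1 + d) (by omega)
      have hin := hineq_right (m - 1 + d) (by omega) (by omega)
      have step : totalDist G (c (m - 1 + d)) ≤ totalDist G (c (m - 1 + d + 1)) := by omega
      exact le_trans (ih (by omega)) step
  have hchainL : ∀ d, d ≤ m - 1 → totalDist G (c (m - 1)) ≤ totalDist G (c (m - 1 - d)) := by
    intro d
    induction d with
    | zero => intro _; exact le_refl _
    | succ d ih =>
      intro h
      have hk := hkey (m - 1 - (d + 1)) (by omega)
      have hin := hineq_left (m - 1 - (d + 1)) (by omega)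
      have step : totalDist G (c (m - 1 - (d + 1) + 1)) ≤ totalDist G (c (m - 1 - (d + 1))) := by
        omega
      rw [show m - 1 - (d + 1) + 1 = m - 1 - d by omega] at step
      exact le_trans (ih (by omega)) step
  have hc1 : c (m - 1) = u 1 := hcu 1 le_rfl hm
  intro i hi1 hi2
  constructor
  · have h := hchainL (i - 1) (by omega)
    rw [show m - 1 - (i - 1) = m - i by omega, hcu i hi1 hi2, hc1] at h
    exact h
  · have h := hchainR i (by omega)
    rw [hcw i hi1 hi2, hc1] at h
    exact h
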